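/- Let Q be a finite quiver and D a perfect matching of Q (a set of arrows such that each unit cycle of Q contains exactly one arrow of D). If the subquiver Q \ D has a source at vertex i (i.e., every arrow with head i lies in D and some arrow has tail i), then no arrow with tail i lies in D, and the set D' obtained from D by removing all arrows with head i and adding all arrows with tail i is again a perfect matching. -/

import Mathlib

open Classical

/-- A quiver given by tail and head maps on an arrow type. -/
structure QuiverData (V E : Type*) where
  t : E → V
  h : E → V

variable {V E V' E' : Type*}

/-- `n_D(p)`: the number of steps of the path `p` (a list of arrows, in traversal
order) lying in the set of arrows `D`. -/
noncomputable def nD (D : Set E) (p : List E) : ℕ :=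
  p.countP (fun e => decide (e ∈ D))

/-- `p` is a composable path: the head of each step is the tail of the next. -/
def IsPath (Q : QuiverData V E) (p : List E) : Prop :=
  p.Chain' (fun a b => Q.h a = Q.t b)

/-- `p` is a nonempty oriented cycle. -/
def IsCycle (Q : QuiverData V E) (p : List E) : Prop :=
  IsPath Q p ∧ p ≠ [] ∧
    ∃ a b, p.head? = some a ∧ p.getLast? = some b ∧ Q.h b = Q.t a

/-- `D` is a perfect matching with respect to the set `U` of unit cycles:
each unit cycle contains precisely one arrow of `D`. -/
def IsPerfectMatching (U : Set (List E)) (D : Set E) : Prop :=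
  ∀ c ∈ U, nD D c = 1

/-- Abstract combinatorial model of a dimer quiver: the distinguished unit
cycles are oriented cycles, and each arrow lies in exactly two unit cycles. -/
def IsDimer (Q : QuiverData V E) (U : Set (List E)) : Prop :=
  (∀ c ∈ U, IsCycle Q c) ∧ (∀ e : E, {c ∈ U | e ∈ c}.ncard = 2)

/-- The defining relations of the dimer algebra: `p ∼ q` whenever `pa` and `qa`
are unit cycles for a common arrow `a` (here the path `pa`, "first `a`, then `p`",
is the list `a :: p`). -/
inductive DimerRel (U : Set (List E)) : List E → List E → Prop
  | base {p q : List E} {a : E} : (a :: p) ∈ U → (a :: q) ∈ U → DimerRel U p q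

/-- The congruence on paths generated by a relation `R`: the smallest equivalence
relation containing `R` and compatible with concatenation of paths.
`PathEquiv R p q` models `p = q` modulo the ideal generated by `R`. -/
inductive PathEquiv (R : List E → List E → Prop) : List E → List E → Prop
  | of {p q : List E} : R p q → PathEquiv R p q
  | refl (p : List E) : PathEquiv R p p
  | symm {p q : List E} : PathEquiv R p q → PathEquiv R q p
  | trans {p q r : List E} : PathEquiv R p q → PathEquiv R q r → PathEquiv R p r
  | mul {p q p' q' : List E} : PathEquiv R p q → PathEquiv R p' q' →
      PathEquiv R (p ++ p') (q ++ q')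

/-- Two sets of arrows are equivalent perfect matchings when they assign the same
count to every cycle. -/
def MatchingEquiv (Q : QuiverData V E) (D D' : Set E) : Prop :=
  ∀ p, IsCycle Q p → nD D p = nD D' p

/-- An arrow is nonrigid if every perfect matching containing it is equivalent to
a perfect matching not containing it. -/
def NonrigidArrow (Q : QuiverData V E) (U : Set (List E)) (e : E) : Prop :=
  ∀ D, IsPerfectMatching U D → e ∈ D →
    ∃ D', IsPerfectMatching U D' ∧ MatchingEquiv Q D D' ∧ e ∉ D'

/-- `p` is a path from `u` to `v`. -/
def PathFromTo (Q : QuiverData V E) (p : List E) (u v : V) : Prop :=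
  IsPath Q p ∧ ((p = [] ∧ u = v) ∨
    ∃ a b, p.head? = some a ∧ p.getLast? = some b ∧ Q.t a = u ∧ Q.h b = v)

/-- A perfect matching `D` is simple if `Q \ D` is strongly connected. -/
def IsSimpleMatching (Q : QuiverData V E) (U : Set (List E)) (D : Set E) : Prop :=
  IsPerfectMatching U D ∧
    ∀ u v : V, ∃ p, PathFromTo Q p u v ∧ ∀ e ∈ p, e ∉ D

/-- `ρ`, `φ` present `Q'` as obtained from `Q` by contracting the arrows `e`
with `φ e = none` to vertices. -/
def IsContractionMap (Q : QuiverData V E) (Q' : QuiverData V' E')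
    (ρ : V → V') (φ : E → Option E') : Prop :=
  (∀ e e', φ e = some e' → Q'.t e' = ρ (Q.t e) ∧ Q'.h e' = ρ (Q.h e)) ∧
  (∀ e, φ e = none → ρ (Q.t e) = ρ (Q.h e)) ∧
  Function.Surjective ρ ∧ (∀ e' : E', ∃ e, φ e = some e')

/-- Endpoints of an arrow traversed forwards (`true`) or backwards (`false`). -/
def dirEnds (Q : QuiverData V E) : E × Bool → V × V
  | (e, true) => (Q.t e, Q.h e)
  | (e, false) => (Q.h e, Q.t e)

/-- A nonempty unoriented cycle in the underlying graph of `Q`. -/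
def IsUnorientedCycle (Q : QuiverData V E) (w : List (E × Bool)) : Prop :=
  w ≠ [] ∧ w.Chain' (fun x y => (dirEnds Q x).2 = (dirEnds Q y).1) ∧
    ∃ x y, w.head? = some x ∧ w.getLast? = some y ∧
      (dirEnds Q y).2 = (dirEnds Q x).1

/-- `c'` is a cyclic rotation of `c`. -/
def IsRotation (c c' : List E) : Prop := ∃ x y, c = x ++ y ∧ c' = y ++ x

/-- A unit cycle based at the vertex `i`: a cyclic rotation of a unit cycle whose
first arrow has tail `i`. -/
def BasedUnitCycle (Q : QuiverData V E) (U : Set (List E)) (i : V)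
    (c : List E) : Prop :=
  (∃ c₀ ∈ U, IsRotation c₀ c) ∧ ∃ a, c.head? = some a ∧ Q.t a = i



section Aux0

variable {V E : Type*}

lemma getLast?_cons_eq {α : Type*} (a : α) (l : List α) :
    (a :: l).getLast? = some (l.getLastD a) := by
  cases l using List.reverseRecOn with
  | nil => rfl
  | append_singleton ys y =>
    rw [List.getLastD_concat, show a :: (ys ++ [y]) = (a :: ys) ++ [y] from rfl,
      List.getLast?_concat]

lemma heads_eq_aux (Q : QuiverData V E) :
    ∀ (c : List E) (a : E), IsPath Q (a :: c) →
      (a :: c).map Q.h = c.map Q.t ++ [Q.h (c.getLastD a)] := by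
  intro c
  induction c with
  | nil => intro a _; simp [List.getLastD]
  | cons b c' ih =>
    intro a hp
    have h1 : Q.h a = Q.t b := (List.isChain_cons_cons.mp hp).1
    have h2 : IsPath Q (b :: c') := (List.isChain_cons_cons.mp hp).2
    simp only [List.map_cons, ih b h2, List.getLastD_cons, h1, List.cons_append]

lemma cycle_count_aux (Q : QuiverData V E) {c : List E} (hc : IsCycle Q c)
    (f : V → Bool) :
    c.countP (fun e => f (Q.t e)) = c.countP (fun e => f (Q.h e)) := by
  obtain ⟨hpath, hne, a, b, hhd, hlast, hwrap⟩ := hc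
  obtain ⟨rest, rfl⟩ : ∃ rest, c = a :: rest := by
    cases c with
    | nil => simp at hhd
    | cons x xs =>
      simp only [List.head?_cons, Option.some.injEq] at hhd
      exact ⟨xs, by rw [hhd]⟩
  have hb : rest.getLastD a = b := by
    rw [getLast?_cons_eq] at hlast
    exact Option.some.inj hlast
  have hmap := heads_eq_aux Q rest a hpath
  have km : ∀ (g : E → V), (a :: rest).countP (fun e => f (g e))
      = ((a :: rest).map g).countP f := by
    intro g; rw [List.countP_map]; rfl
  rw [km Q.t, km Q.h, hmap, hb, hwrap]
  simp only [List.map_cons, List.countP_append, List.countP_cons]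
  simp <;> omega

lemma countP_add_eq_aux (l : List E) (p q r s : E → Bool)
    (h : ∀ e ∈ l, ((if p e then 1 else 0) + (if q e then 1 else 0) : ℕ)
        = (if r e then 1 else 0) + (if s e then 1 else 0)) :
    l.countP p + l.countP q = l.countP r + l.countP s := by
  induction l with
  | nil => simp
  | cons a l ih =>
    have ha := h a (List.mem_cons_self)
    have hl := ih fun e he => h e (List.mem_cons_of_mem _ he)
    simp only [List.countP_cons]
    omega

end Aux0

/-- If a perfect matching `D` has a source of `Q \ D` at the vertex
`i` (every arrow with head `i` lies in `D`, and some arrow has tail `i`), then no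
arrow with tail `i` lies in `D`, and replacing in `D` the arrows with head `i` by
the arrows with tail `i` yields again a perfect matching. -/
theorem stmt0 [Fintype V] [Fintype E] (Q : QuiverData V E) (U : Set (List E))
    (hdimer : IsDimer Q U) (D : Set E) (hD : IsPerfectMatching U D) (i : V)
    (hin : ∀ a : E, Q.h a = i → a ∈ D) (hout : ∃ a : E, Q.t a = i) :
    (∀ b : E, Q.t b = i → b ∉ D) ∧
      IsPerfectMatching U
        ((D \ {a : E | Q.h a = i}) ∪ {a : E | Q.t a = i}) := by
  obtain ⟨hcyc, hcard⟩ := hdimer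
  -- Claim 1: no arrow with tail i lies in D
  have claim1 : ∀ b : E, Q.t b = i → b ∉ D := by
    intro b htb hbD
    have hS : {c ∈ U | b ∈ c}.ncard = 2 := hcard b
    obtain ⟨c₀, hc₀U, hbc₀⟩ :=
      Set.nonempty_of_ncard_ne_zero (by omega : {c ∈ U | b ∈ c}.ncard ≠ 0)
    have hc₀D : nD D c₀ = 1 := hD c₀ hc₀U
    have hTH : c₀.countP (fun e => decide (Q.t e = i))
        = c₀.countP (fun e => decide (Q.h e = i)) :=
      cycle_count_aux Q (hcyc c₀ hc₀U) (fun v => decide (v = i))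
    have hTpos : 0 < c₀.countP (fun e => decide (Q.t e = i)) :=
      List.countP_pos_iff.2 ⟨b, hbc₀, by simp [htb]⟩
    obtain ⟨a, hac₀, haI⟩ := List.countP_pos_iff.1 (hTH ▸ hTpos)
    have hai : Q.h a = i := by simpa using haI
    have haD : a ∈ D := hin a hai
    have hfil : (c₀.filter (fun e => decide (e ∈ D))).length = 1 := by
      rw [← List.countP_eq_length_filter]; exact hc₀D
    obtain ⟨x, hx⟩ := List.length_eq_one_iff.mp hfil
    have hax : a = x := by
      have : a ∈ c₀.filter (fun e => decide (e ∈ D)) :=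
        List.mem_filter.2 ⟨hac₀, by simp [haD]⟩
      simpa [hx] using this
    have hbx : b = x := by
      have : b ∈ c₀.filter (fun e => decide (e ∈ D)) :=
        List.mem_filter.2 ⟨hbc₀, by simp [hbD]⟩
      simpa [hx] using this
    have hloop : Q.h b = i := by rw [hbx, ← hax]; exact hai
    -- every unit cycle containing b equals [b]
    have hkey : ∀ c, c ∈ U → b ∈ c → c = [b] := by
      intro c hcU hbc
      have hc1 : nD D c = 1 := hD c hcU
      have hcycle := hcyc c hcU
      have hTle : c.countP (fun e => decide (Q.t e = i)) ≤ 1 := by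
        have h1 : c.countP (fun e => decide (Q.t e = i))
            = c.countP (fun e => decide (Q.h e = i)) :=
          cycle_count_aux Q hcycle (fun v => decide (v = i))
        have h2 : c.countP (fun e => decide (Q.h e = i))
            ≤ c.countP (fun e => decide (e ∈ D)) := by
          apply List.countP_mono_left
          intro e _ he
          simpa using hin e (by simpa using he)
        calc c.countP (fun e => decide (Q.t e = i)) ≤ _ := le_of_eq h1
          _ ≤ _ := h2
          _ = 1 := hc1
      obtain ⟨x, y, rfl⟩ := List.append_of_mem hbc
      cases y with
      | cons b' y' =>
        exfalso
        have hchain : Q.h b = Q.t b' := by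
          have := (List.isChain_append.mp hcycle.1).2.1
          exact (List.isChain_cons_cons.mp this).1
        have htb' : Q.t b' = i := by rw [← hchain, hloop]
        have : 2 ≤ (x ++ b :: b' :: y').countP (fun e => decide (Q.t e = i)) := by
          simp only [List.countP_append, List.countP_cons, htb, htb']
          simp <;> omega
        omega
      | nil =>
        cases x with
        | nil => rfl
        | cons e x' =>
          exfalso
          obtain ⟨_, _, a₀, b₀, hhd₀, hlast₀, hwrap₀⟩ := hcycle
          have hb₀ : b₀ = b := by
            have hgl : ((e :: x') ++ [b]).getLast? = some b :=
              List.getLast?_concat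
            rw [hgl] at hlast₀
            exact (Option.some.inj hlast₀).symm
          have ha₀ : a₀ = e := by
            simp only [List.cons_append, List.head?_cons, Option.some.injEq] at hhd₀
            exact hhd₀.symm
          have hte : Q.t e = i := by rw [← ha₀, ← hwrap₀, hb₀, hloop]
          have : 2 ≤ ((e :: x') ++ [b]).countP (fun e => decide (Q.t e = i)) := by
            simp only [List.countP_append, List.countP_cons, htb, hte]
            simp <;> omega
          omega
    have hsub : {c ∈ U | b ∈ c} ⊆ {[b]} := fun c hc => hkey c hc.1 hc.2
    have : {c ∈ U | b ∈ c}.ncard ≤ 1 := by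
      calc {c ∈ U | b ∈ c}.ncard ≤ ({[b]} : Set (List E)).ncard :=
            Set.ncard_le_ncard hsub (Set.finite_singleton _)
        _ = 1 := Set.ncard_singleton _
    omega
  refine ⟨claim1, ?_⟩
  intro c hcU
  have hc1 : nD D c = 1 := hD c hcU
  have hcycle := hcyc c hcU
  set D' : Set E := (D \ {a : E | Q.h a = i}) ∪ {a : E | Q.t a = i} with hD'def
  have hD'mem : ∀ e : E, e ∈ D' ↔ ((e ∈ D ∧ ¬ Q.h e = i) ∨ Q.t e = i) := by
    intro e
    simp [hD'def, Set.mem_union, Set.mem_diff, Set.mem_setOf_eq]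
  have hsum : nD D' c + nD {a : E | Q.h a = i} c
      = nD D c + nD {a : E | Q.t a = i} c := by
    unfold nD
    apply countP_add_eq_aux
    intro e _
    by_cases h1 : Q.h e = i
    · by_cases h2 : Q.t e = i
      · exact absurd (hin e h1) (claim1 e h2)
      · simp [hD'mem, h1, h2, hin e h1, Set.mem_setOf_eq]
    · by_cases h2 : Q.t e = i
      · simp [hD'mem, h1, h2, claim1 e h2, Set.mem_setOf_eq]
      · simp [hD'mem, h1, h2, Set.mem_setOf_eq]
  have hTH : nD {a : E | Q.t a = i} c = nD {a : E | Q.h a = i} c := by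
    unfold nD
    exact cycle_count_aux Q hcycle (fun v => decide (v = i))
  show nD D' c = 1
  omega
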